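/- Let n be a positive integer, k = ⌈log₃ n⌉, and m = δ·p^r with δ, r positive integers, p ≥ 5 prime, p not dividing δ, and n ≤ m < 3^k < 3n. If p^r + δ·(p-1)/2 ≤ n, then there exist 1 ≤ a < b ≤ n with b³ + b ≡ a³ + a (mod m). -/

import Mathlib

-- key existence lemma mod p
lemma exists_ws (p : ℕ) [Fact p.Prime] (hp5 : 5 ≤ p) :
    ∃ w s : ZMod p, w ≠ 0 ∧ s ≠ 0 ∧ w ^ 2 + 3 * s ^ 2 = -4 := by
  have key : ∀ c : ℕ, 0 < c → c < p → ((c : ℕ) : ZMod p) ≠ 0 := by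
    intro c hc0 hcp h
    have := (ZMod.natCast_eq_zero_iff c p).mp h
    have := Nat.le_of_dvd hc0 this
    omega
  have h2 : (2 : ZMod p) ≠ 0 := by exact_mod_cast key 2 (by norm_num) (by omega)
  have h3 : (3 : ZMod p) ≠ 0 := by exact_mod_cast key 3 (by norm_num) (by omega)
  by_cases hsq : IsSquare (-3 : ZMod p)
  · have hp5' : p ≠ 5 := by
      have hns : ¬ IsSquare (-3 : ZMod 5) := by decide
      intro h
      exact hns (h ▸ hsq)
    obtain ⟨d, hd⟩ := hsq
    have hdne : d ≠ 0 := by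
      intro h; rw [h, mul_zero] at hd
      exact h3 (by linear_combination -hd)
    have h5 : (5 : ZMod p) ≠ 0 := by exact_mod_cast key 5 (by norm_num) (by omega)
    refine ⟨3 * 2⁻¹, 5 * (2 * d)⁻¹, ?_, ?_, ?_⟩
    · exact mul_ne_zero h3 (inv_ne_zero h2)
    · exact mul_ne_zero h5 (inv_ne_zero (mul_ne_zero h2 hdne))
    · field_simp
      linear_combination (-25 : ZMod p) * hd
  · by_cases hsq3 : IsSquare (3 : ZMod p)
    · obtain ⟨e, he⟩ := hsq3
      have hene : e ≠ 0 := by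
        intro h; rw [h, mul_zero] at he; exact h3 he
      have hI : ¬ IsSquare (-1 : ZMod p) := by
        rintro ⟨i, hi⟩
        refine hsq ⟨e * i, ?_⟩
        have h' : (e * i) * (e * i) = (e * e) * (i * i) := by ring
        rw [h', ← he, ← hi]; ring
      obtain ⟨a, b, hab⟩ := ZMod.sq_add_sq p (-4 : ZMod p)
      have ha0 : a ≠ 0 := by
        intro h
        refine hI ⟨b * 2⁻¹, ?_⟩
        have hb2 : b ^ 2 = -4 := by rw [h] at hab; linear_combination hab
        field_simp
        linear_combination -hb2
      have hb0 : b ≠ 0 := by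
        intro h
        refine hI ⟨a * 2⁻¹, ?_⟩
        have ha2 : a ^ 2 = -4 := by rw [h] at hab; linear_combination hab
        field_simp
        linear_combination -ha2
      refine ⟨a, b * e⁻¹, ha0, mul_ne_zero hb0 (inv_ne_zero hene), ?_⟩
      field_simp
      linear_combination (-(a ^ 2) - 4) * he + 3 * hab
    · have hm3 : (-3 : ZMod p) ≠ 0 := neg_ne_zero.mpr h3
      have hq3 : quadraticChar (ZMod p) 3 = -1 :=
        (quadraticChar_neg_one_iff_not_isSquare).mpr hsq3
      have hqm3 : quadraticChar (ZMod p) (-3) = -1 :=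
        (quadraticChar_neg_one_iff_not_isSquare).mpr hsq
      have hmul : quadraticChar (ZMod p) (-1) * quadraticChar (ZMod p) 3 = -1 := by
        rw [← map_mul]
        rw [show ((-1 : ZMod p) * 3) = -3 by ring]
        exact hqm3
      have h1 : quadraticChar (ZMod p) (-1) = 1 := by
        rw [hq3] at hmul
        linarith
      obtain ⟨i, hi⟩ := (quadraticChar_one_iff_isSquare (neg_ne_zero.mpr (one_ne_zero))).mp h1
      have hine : i ≠ 0 := by
        intro h; rw [h, mul_zero] at hi
        exact one_ne_zero (neg_eq_zero.mp hi)
      exact ⟨i, i, hine, hine, by linear_combination -4 * hi⟩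

-- Hensel lifting for the specific quadratic 3x²+3Cx+C²+1
lemma hensel_quad (p : ℕ) (hp : p.Prime) (C A₀ : ℤ)
    (h0 : (p : ℤ) ∣ 3 * A₀ ^ 2 + 3 * C * A₀ + C ^ 2 + 1)
    (hd : ¬ (p : ℤ) ∣ 6 * A₀ + 3 * C) :
    ∀ k : ℕ, ∃ A : ℤ, (p : ℤ) ∣ A - A₀ ∧
      (p : ℤ) ^ (k + 1) ∣ 3 * A ^ 2 + 3 * C * A + C ^ 2 + 1 := by
  haveI : Fact p.Prime := ⟨hp⟩
  intro k
  induction k with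
  | zero => exact ⟨A₀, by simp, by simpa using h0⟩
  | succ k ih =>
    obtain ⟨A, hA1, hA2⟩ := ih
    have hDnd : ¬ (p : ℤ) ∣ 6 * A + 3 * C := by
      intro h
      apply hd
      have he : (6 * A₀ + 3 * C) = (6 * A + 3 * C) - 6 * (A - A₀) := by ring
      rw [he]
      exact dvd_sub h (Dvd.dvd.mul_left hA1 6)
    have hDz : (((6 * A + 3 * C : ℤ) : ZMod p)) ≠ 0 := by
      rwa [Ne, ZMod.intCast_zmod_eq_zero_iff_dvd]
    obtain ⟨E, hDE⟩ : ∃ E : ℤ, (p : ℤ) ∣ (6 * A + 3 * C) * E - 1 := by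
      set X : ZMod p := ((6 * A + 3 * C : ℤ) : ZMod p) with hX
      refine ⟨((X⁻¹.val : ℕ) : ℤ), ?_⟩
      rw [← ZMod.intCast_zmod_eq_zero_iff_dvd]
      have h1 : (((6 * A + 3 * C) * ((X⁻¹.val : ℕ) : ℤ) - 1 : ℤ) : ZMod p)
          = X * X⁻¹ - 1 := by
        rw [Int.cast_sub, Int.cast_mul, Int.cast_one, Int.cast_natCast,
          ZMod.natCast_zmod_val]
      rw [h1, mul_inv_cancel₀ hDz, sub_self]
    obtain ⟨u, hu⟩ := hDE
    obtain ⟨Q, hQ⟩ := hA2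
    refine ⟨A - (p : ℤ) ^ (k + 1) * Q * E, ?_, ?_⟩
    · have : A - (p:ℤ)^(k+1) * Q * E - A₀ = (A - A₀) - (p:ℤ)^(k+1) * Q * E := by ring
      rw [this]
      exact dvd_sub hA1 (Dvd.dvd.mul_right (Dvd.dvd.mul_right (dvd_pow_self _ (Nat.succ_ne_zero k)) Q) E)
    · refine ⟨-(Q * u) + (p:ℤ) ^ k * (3 * Q ^ 2 * E ^ 2), ?_⟩
      linear_combination hQ + (-((p:ℤ)^(k+1)) * Q) * hu

-- congruence transfer for the quadratic
lemma gshift (M C x y : ℤ) (hxy : M ∣ x - y)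
    (hx : M ∣ 3 * x ^ 2 + 3 * C * x + C ^ 2 + 1) :
    M ∣ 3 * y ^ 2 + 3 * C * y + C ^ 2 + 1 := by
  have h : 3 * y ^ 2 + 3 * C * y + C ^ 2 + 1
      = (3 * x ^ 2 + 3 * C * x + C ^ 2 + 1) - (x - y) * (3 * (x + y) + 3 * C) := by
    ring
  rw [h]
  exact dvd_sub hx (Dvd.dvd.mul_right hxy _)

theorem stmt_9 (n k m δ p r : ℕ) (hn : 0 < n) (hk : k = ⌈Real.logb 3 n⌉₊)
    (hδ : 0 < δ) (hr : 0 < r) (hp : p.Prime) (hp5 : 5 ≤ p) (hpδ : ¬ p ∣ δ)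
    (hm : m = δ * p ^ r) (h1 : n ≤ m) (h2 : m < 3 ^ k) (h3 : 3 ^ k < 3 * n)
    (hle : p ^ r + δ * ((p - 1) / 2) ≤ n) :
    ∃ a b : ℕ, 1 ≤ a ∧ a < b ∧ b ≤ n ∧ a ^ 3 + a ≡ b ^ 3 + b [MOD m] := by
  haveI : Fact p.Prime := ⟨hp⟩
  haveI : NeZero p := ⟨hp.ne_zero⟩
  obtain ⟨w, s, hw, hs, hws⟩ := exists_ws p hp5
  have h2z : (2 : ZMod p) ≠ 0 := by
    intro h
    have h' : ((2 : ℕ) : ZMod p) = 0 := by exact_mod_cast h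
    have := Nat.le_of_dvd (by norm_num) ((ZMod.natCast_eq_zero_iff 2 p).mp h')
    omega
  have h3z : (3 : ZMod p) ≠ 0 := by
    intro h
    have h' : ((3 : ℕ) : ZMod p) = 0 := by exact_mod_cast h
    have := Nat.le_of_dvd (by norm_num) ((ZMod.natCast_eq_zero_iff 3 p).mp h')
    omega
  have hδp : ((δ : ℕ) : ZMod p) ≠ 0 := by
    rw [Ne, ZMod.natCast_eq_zero_iff]; exact hpδ
  have hpodd : p % 2 = 1 := Nat.odd_iff.mp (hp.odd_of_ne_two (by omega))
  set x : ZMod p := w * ((δ : ℕ) : ZMod p)⁻¹ with hx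
  have hxne : x ≠ 0 := mul_ne_zero hw (inv_ne_zero hδp)
  set t₁ : ℕ := x.val with ht₁
  have ht₁0 : t₁ ≠ 0 := fun h => hxne ((ZMod.val_eq_zero x).mp h)
  have ht₁p : t₁ < p := ZMod.val_lt x
  have hxcast : ((t₁ : ℕ) : ZMod p) = x := ZMod.natCast_zmod_val x
  set t : ℕ := if t₁ ≤ (p - 1) / 2 then t₁ else p - t₁ with ht
  have ht1 : 1 ≤ t := by rw [ht]; split <;> omega
  have ht2 : t ≤ (p - 1) / 2 := by rw [ht]; split <;> omega
  have hδt : ((δ * t : ℕ) : ZMod p) = w ∨ ((δ * t : ℕ) : ZMod p) = -w := by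
    rw [ht]
    split
    · left
      push_cast
      rw [hxcast, hx]
      field_simp
    · right
      push_cast [Nat.cast_sub (le_of_lt ht₁p)]
      rw [hxcast, ZMod.natCast_self, hx]
      field_simp
      try ring
  set c : ZMod p := ((δ * t : ℕ) : ZMod p) with hc
  have hc2 : c ^ 2 = w ^ 2 := by
    rcases hδt with h | h <;> rw [h] <;> ring
  set a₀ : ZMod p := (s - c) * 2⁻¹ with ha₀
  have hg0 : 3 * a₀ ^ 2 + 3 * c * a₀ + c ^ 2 + 1 = 0 := by
    rw [ha₀]
    field_simp
    linear_combination hws + hc2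
  have hg'0 : 6 * a₀ + 3 * c = 3 * s := by
    rw [ha₀]
    field_simp
    ring
  set C : ℤ := ((δ * t : ℕ) : ℤ) with hCdef
  set A₀ : ℤ := ((a₀.val : ℕ) : ℤ) with hA₀def
  have hA₀cast : ((A₀ : ℤ) : ZMod p) = a₀ := by
    rw [hA₀def, Int.cast_natCast]; exact ZMod.natCast_zmod_val a₀
  have hCcast : ((C : ℤ) : ZMod p) = c := by
    rw [hCdef, Int.cast_natCast, hc]
  have h0 : (p : ℤ) ∣ 3 * A₀ ^ 2 + 3 * C * A₀ + C ^ 2 + 1 := by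
    rw [← ZMod.intCast_zmod_eq_zero_iff_dvd]
    push_cast [hA₀cast, hCcast]
    linear_combination hg0
  have hd : ¬ (p : ℤ) ∣ 6 * A₀ + 3 * C := by
    rw [← ZMod.intCast_zmod_eq_zero_iff_dvd]
    push_cast [hA₀cast, hCcast]
    rw [show (6 : ZMod p) * a₀ + 3 * c = 6 * a₀ + 3 * c from rfl, hg'0]
    exact mul_ne_zero h3z hs
  obtain ⟨A, hA1, hA2⟩ := hensel_quad p hp C A₀ h0 hd (r - 1)
  rw [show r - 1 + 1 = r by omega] at hA2
  set M : ℤ := (p : ℤ) ^ r with hM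
  have hM0 : 0 < M := by positivity
  set A' : ℤ := A % M with hA'
  have hA'0 : 0 ≤ A' := Int.emod_nonneg A (ne_of_gt hM0)
  have hA'M : A' < M := Int.emod_lt_of_pos A hM0
  have hAA' : M ∣ A - A' := by
    rw [hA']
    exact Int.dvd_self_sub_of_emod_eq rfl
  have hgA' : M ∣ 3 * A' ^ 2 + 3 * C * A' + C ^ 2 + 1 := gshift M C A A' hAA' hA2
  set a : ℕ := if A' = 0 then p ^ r else A'.toNat with ha
  have ha1 : 1 ≤ a := by
    rw [ha]; split
    · exact Nat.one_le_iff_ne_zero.mpr (pow_ne_zero r hp.ne_zero)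
    · omega
  have hapr : a ≤ p ^ r := by
    rw [ha]; split
    · exact le_refl _
    · have h' : A' < ((p ^ r : ℕ) : ℤ) := by push_cast; exact hA'M
      omega
  have hacast : M ∣ (a : ℤ) - A' := by
    rw [ha]; split
    · rename_i h
      rw [h, sub_zero]
      push_cast
      exact dvd_refl _
    · rw [Int.toNat_of_nonneg hA'0, sub_self]
      exact dvd_zero M
  have hga : M ∣ 3 * (a : ℤ) ^ 2 + 3 * C * (a : ℤ) + C ^ 2 + 1 :=
    gshift M C A' (a : ℤ) (by rw [show A' - (a : ℤ) = -((a : ℤ) - A') by ring]; exact Dvd.dvd.neg_right hacast) hgA'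
  refine ⟨a, a + δ * t, ha1, ?_, ?_, ?_⟩
  · exact Nat.lt_add_of_pos_right (Nat.mul_pos hδ ht1)
  · have hδt2 : δ * t ≤ δ * ((p - 1) / 2) := Nat.mul_le_mul_left δ ht2
    exact le_trans (Nat.add_le_add hapr hδt2) hle
  · rw [Nat.modEq_iff_dvd]
    obtain ⟨G, hG⟩ := hga
    refine ⟨(t : ℤ) * G, ?_⟩
    push_cast [hm]
    rw [hCdef] at hG
    push_cast at hG
    linear_combination ((δ : ℤ) * t) * hG
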